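/- Let σ > 0, let X be a random variable with the centered Gaussian law N(0,σ²), and let l : ℝ² → ℝ be continuously differentiable with bounded partial derivatives. Then the function f_l(x₁, x₂) := −σ⁻² ∫₀¹ (2√(t(1−t)))⁻¹ · E[X · l(√t x₁ + √(1−t) X, x₂)] dt admits the representation f_l(x₁, x₂) = −∫₀¹ (2√t)⁻¹ · E[∂₁l(√t · x₁ + √(1−t) · X, x₂)] dt for all (x₁, x₂) ∈ ℝ². -/

import Mathlib

open MeasureTheory ProbabilityTheory Real Filter Set
open scoped NNReal ENNReal Topology

/-- Partial derivative of `f : ℝ × ℝ → ℝ` in its first variable. -/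
noncomputable def pderiv1 (f : ℝ × ℝ → ℝ) (p : ℝ × ℝ) : ℝ :=
  deriv (fun y => f (y, p.2)) p.1

/-- Partial derivative of `f : ℝ × ℝ → ℝ` in its second variable. -/
noncomputable def pderiv2 (f : ℝ × ℝ → ℝ) (p : ℝ × ℝ) : ℝ :=
  deriv (fun y => f (p.1, y)) p.2

/-- The Stein solution
`f_l(x₁,x₂) = −σ⁻² ∫₀¹ (2√(t(1−t)))⁻¹ E[X l(√t x₁ + √(1−t) X, x₂)] dt`. -/
noncomputable def steinSol {Ω : Type*} [MeasurableSpace Ω] (P : Measure Ω)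
    (X : Ω → ℝ) (σ : ℝ) (l : ℝ × ℝ → ℝ) : ℝ × ℝ → ℝ :=
  fun p => -(σ ^ 2)⁻¹ *
    ∫ t in (0:ℝ)..1, (2 * Real.sqrt (t * (1 - t)))⁻¹ *
      ∫ ω, X ω * l (Real.sqrt t * p.1 + Real.sqrt (1 - t) * X ω, p.2) ∂P

lemma hasDerivAt_slice {l : ℝ × ℝ → ℝ} (hl : ContDiff ℝ 1 l) (x₂ z : ℝ) :
    HasDerivAt (fun y => l (y, x₂)) (pderiv1 l (z, x₂)) z := by
  have hd : DifferentiableAt ℝ (fun y : ℝ => l (y, x₂)) z :=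
    ((hl.differentiable one_ne_zero (z, x₂)).comp z
      ((differentiableAt_id).prodMk (differentiableAt_const _)))
  exact hd.hasDerivAt

lemma pderiv1_eq_fderiv {l : ℝ × ℝ → ℝ} (hl : ContDiff ℝ 1 l) (p : ℝ × ℝ) :
    pderiv1 l p = fderiv ℝ l p ((1 : ℝ), (0 : ℝ)) := by
  have h2 : HasDerivAt (fun y : ℝ => (y, p.2)) ((1:ℝ), (0:ℝ)) p.1 :=
    HasDerivAt.prodMk (hasDerivAt_id p.1) (hasDerivAt_const _ _)
  have h3 : HasDerivAt (fun y : ℝ => l (y, p.2)) (fderiv ℝ l (p.1, p.2) ((1:ℝ), (0:ℝ))) p.1 :=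
    (hl.differentiable one_ne_zero (p.1, p.2)).hasFDerivAt.comp_hasDerivAt p.1 h2
  simpa [pderiv1] using h3.deriv

lemma continuous_pderiv1 {l : ℝ × ℝ → ℝ} (hl : ContDiff ℝ 1 l) :
    Continuous (pderiv1 l) := by
  rw [show pderiv1 l = fun p => fderiv ℝ l p ((1:ℝ), (0:ℝ)) from funext (pderiv1_eq_fderiv hl)]
  exact (hl.continuous_fderiv one_ne_zero).clm_apply continuous_const

lemma gaussianPDFReal_zero_eq (v : ℝ≥0) (x : ℝ) :
    gaussianPDFReal 0 v x
      = (Real.sqrt (2 * Real.pi * v))⁻¹ * Real.exp (-(2 * (v:ℝ))⁻¹ * x ^ 2) := by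
  rw [gaussianPDFReal]
  congr 1
  rw [sub_zero, div_eq_mul_inv]
  ring_nf

lemma hasDerivAt_gaussianPDFReal_zero {v : ℝ≥0} (hv : v ≠ 0) (x : ℝ) :
    HasDerivAt (gaussianPDFReal 0 v) (-(x / v) * gaussianPDFReal 0 v x) x := by
  have hvr : (v : ℝ) ≠ 0 := by exact_mod_cast hv
  have h1 : HasDerivAt (fun x : ℝ => -(x - 0) ^ 2 / (2 * (v:ℝ)))
      (-(2 * (x - 0) ^ 1 * 1) / (2 * (v:ℝ))) x := by
    exact (((hasDerivAt_id x).sub_const 0).pow 2).neg.div_const _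
  have h2 := (h1.exp).const_mul (Real.sqrt (2 * Real.pi * v))⁻¹
  refine h2.congr_deriv ?_
  rw [gaussianPDFReal, sub_zero]
  field_simp

lemma integral_gaussianReal_eq {v : ℝ≥0} (hv : v ≠ 0) (f : ℝ → ℝ) :
    ∫ x, f x ∂(gaussianReal 0 v) = ∫ x, gaussianPDFReal 0 v x * f x := by
  rw [gaussianReal_of_var_ne_zero _ hv]
  have : (gaussianPDF 0 v) = fun x => ((Real.toNNReal (gaussianPDFReal 0 v x) : ℝ≥0) : ℝ≥0∞) := rfl
  rw [this, integral_withDensity_eq_integral_smul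
    ((measurable_gaussianPDFReal 0 v).real_toNNReal) f]
  congr 1
  ext x
  rw [NNReal.smul_def, smul_eq_mul, Real.coe_toNNReal _ (gaussianPDFReal_nonneg 0 v x)]

lemma tendsto_linear_mul_pdf_atTop {v : ℝ≥0} (hv : v ≠ 0) (A B : ℝ) :
    Tendsto (fun x => (A + B * |x|) * gaussianPDFReal 0 v x) atTop (𝓝 0) := by
  have hvr : (0:ℝ) < (v:ℝ) := by positivity
  have hb : (0:ℝ) < (2 * (v:ℝ))⁻¹ := by positivity
  set b : ℝ := (2 * (v:ℝ))⁻¹ with hbdef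
  set c : ℝ := (Real.sqrt (2 * Real.pi * v))⁻¹ with hcdef
  have hE : Tendsto (fun x : ℝ => Real.exp (-b * x ^ 2)) atTop (𝓝 0) := by
    have h1 : Tendsto (fun x : ℝ => b * x ^ 2) atTop atTop :=
      (tendsto_pow_atTop two_ne_zero).const_mul_atTop hb
    have h2 : Tendsto (fun x : ℝ => -(b * x ^ 2)) atTop atBot :=
      tendsto_neg_atTop_atBot.comp h1
    have := Real.tendsto_exp_atBot.comp h2
    simpa [Function.comp_def, neg_mul] using this
  have hXE : Tendsto (fun x : ℝ => |x| * Real.exp (-b * x ^ 2)) atTop (𝓝 0) := by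
    have hE2 : Tendsto (fun x : ℝ => Real.exp (-(1/2 : ℝ) * x)) atTop (𝓝 0) := by
      have h2 : Tendsto (fun x : ℝ => -(1/2 : ℝ) * x) atTop atBot := by
        apply Tendsto.const_mul_atTop_of_neg (by norm_num : -(1/2:ℝ) < 0) tendsto_id
      have := Real.tendsto_exp_atBot.comp h2
      simpa [Function.comp_def] using this
    have hlo := (rpow_mul_exp_neg_mul_sq_isLittleO_exp_neg hb 1).isBigO.trans_tendsto hE2
    apply hlo.congr'
    filter_upwards [eventually_ge_atTop (0:ℝ)] with x hx
    rw [Real.rpow_one, abs_of_nonneg hx]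
  have := ((hE.const_mul (A * c)).add (hXE.const_mul (B * c)))
  rw [mul_zero, mul_zero, add_zero] at this
  apply this.congr
  intro x
  rw [gaussianPDFReal_zero_eq]
  ring

lemma gaussian_ibp {v : ℝ≥0} (hv : v ≠ 0) (g g' : ℝ → ℝ)
    (hg : ∀ x, HasDerivAt g (g' x) x) (hg'c : Continuous g')
    {C : ℝ} (hC : ∀ x, |g' x| ≤ C) :
    ∫ x, x * g x ∂(gaussianReal 0 v) = v * ∫ x, g' x ∂(gaussianReal 0 v) := by
  have hvr : (0:ℝ) < (v:ℝ) := by positivity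
  have hvne : (v:ℝ) ≠ 0 := hvr.ne'
  have hC0 : 0 ≤ C := le_trans (abs_nonneg _) (hC 0)
  set φ : ℝ → ℝ := gaussianPDFReal 0 v with hφdef
  have hφc : Continuous φ := by
    rw [hφdef, gaussianPDFReal_def]
    continuity
  have hgc : Continuous g := by
    rw [continuous_iff_continuousAt]; exact fun x => (hg x).continuousAt
  -- growth bound on g
  have hgrow : ∀ x : ℝ, |g x| ≤ |g 0| + C * |x| := by
    intro x
    have key : ‖g x - g 0‖ ≤ C * ‖x - 0‖ := by
      apply Convex.norm_image_sub_le_of_norm_hasDerivWithin_le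
        (fun y _ => (hg y).hasDerivWithinAt) (fun y _ => ?_) convex_univ trivial trivial
      · simpa [Real.norm_eq_abs] using hC y
    rw [Real.norm_eq_abs, Real.norm_eq_abs, sub_zero] at key
    calc |g x| ≤ |g 0| + |g x - g 0| := by
          have := abs_sub_abs_le_abs_sub (g x) (g 0); linarith
      _ ≤ |g 0| + C * |x| := by linarith
  -- the primitive F and its derivative
  set F : ℝ → ℝ := fun x => -(v:ℝ) * (g x * φ x) with hFdef
  have hF : ∀ x, HasDerivAt F (x * g x * φ x - (v:ℝ) * (g' x * φ x)) x := by
    intro x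
    have h1 : HasDerivAt (fun x => g x * φ x)
        (g' x * φ x + g x * (-(x / v) * φ x)) x :=
      (hg x).mul (hasDerivAt_gaussianPDFReal_zero hv x)
    have h2 := h1.const_mul (-(v:ℝ))
    refine h2.congr_deriv ?_
    field_simp
    ring
  -- integrability
  have hφint : Integrable φ := integrable_gaussianPDFReal 0 v
  have int1 : Integrable (fun x => g' x * φ x) :=
    hφint.bdd_mul hg'c.aestronglyMeasurable (Filter.Eventually.of_forall fun x => by simpa [Real.norm_eq_abs] using hC x)
  set b : ℝ := (2 * (v:ℝ))⁻¹ with hbdef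
  have hb : (0:ℝ) < b := by positivity
  set c : ℝ := (Real.sqrt (2 * Real.pi * v))⁻¹ with hcdef
  have hc0 : 0 ≤ c := by positivity
  have hφeq : ∀ x, φ x = c * Real.exp (-b * x ^ 2) := fun x => gaussianPDFReal_zero_eq v x
  have intx2 : Integrable (fun x : ℝ => x ^ 2 * Real.exp (-b * x ^ 2)) := by
    have := integrable_rpow_mul_exp_neg_mul_sq hb (by norm_num : (-1:ℝ) < 2)
    apply this.congr
    filter_upwards with x
    rw [show ((2:ℝ) = ((2:ℕ):ℝ)) by norm_num, Real.rpow_natCast]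
  have intabs : Integrable (fun x : ℝ => |x| * Real.exp (-b * x ^ 2)) := by
    have := (integrable_mul_exp_neg_mul_sq hb).abs
    apply this.congr
    filter_upwards with x
    rw [abs_mul, abs_of_nonneg (Real.exp_nonneg _)]
  have int2 : Integrable (fun x => x * g x * φ x) := by
    have dom : Integrable (fun x : ℝ =>
        (|g 0| * c) * (|x| * Real.exp (-b * x ^ 2)) + (C * c) * (x ^ 2 * Real.exp (-b * x ^ 2))) :=
      (intabs.const_mul _).add (intx2.const_mul _)
    apply dom.mono' ((continuous_id.mul hgc).mul hφc).aestronglyMeasurable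
    filter_upwards with x
    simp only [Pi.mul_apply, id_eq]
    rw [Real.norm_eq_abs, abs_mul, abs_mul]
    have hφx : |φ x| = c * Real.exp (-b * x ^ 2) := by
      rw [abs_of_nonneg (gaussianPDFReal_nonneg 0 v x)]; exact hφeq x
    rw [hφx]
    have h1 : |x| * |g x| ≤ |x| * (|g 0| + C * |x|) :=
      mul_le_mul_of_nonneg_left (hgrow x) (abs_nonneg x)
    calc |x| * |g x| * (c * Real.exp (-b * x ^ 2))
        ≤ |x| * (|g 0| + C * |x|) * (c * Real.exp (-b * x ^ 2)) := by
          apply mul_le_mul_of_nonneg_right h1 (by positivity)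
      _ = |g 0| * c * (|x| * Real.exp (-b * x ^ 2))
          + C * c * (|x| * |x| * Real.exp (-b * x ^ 2)) := by ring
      _ = |g 0| * c * (|x| * Real.exp (-b * x ^ 2))
          + C * c * (x ^ 2 * Real.exp (-b * x ^ 2)) := by rw [abs_mul_abs_self x]; ring
  have int3 : Integrable (fun x => x * g x * φ x - (v:ℝ) * (g' x * φ x)) :=
    int2.sub (int1.const_mul _)
  -- limits of F at ±∞
  have hFbound : ∀ x, ‖F x‖ ≤ ((v:ℝ) * |g 0| + (v:ℝ) * C * |x|) * φ x := by
    intro x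
    rw [hFdef]
    rw [Real.norm_eq_abs, abs_mul, abs_mul, abs_neg, abs_of_nonneg hvr.le,
      abs_of_nonneg (gaussianPDFReal_nonneg 0 v x)]
    have := hgrow x
    have hφ0 : 0 ≤ φ x := gaussianPDFReal_nonneg 0 v x
    nlinarith [mul_le_mul_of_nonneg_right (hgrow x) hφ0, abs_nonneg x]
  have hTtop : Tendsto F atTop (𝓝 0) :=
    squeeze_zero_norm hFbound (tendsto_linear_mul_pdf_atTop hv _ _)
  have hTbot : Tendsto F atBot (𝓝 0) := by
    apply squeeze_zero_norm hFbound
    have := (tendsto_linear_mul_pdf_atTop hv ((v:ℝ) * |g 0|) ((v:ℝ) * C)).comp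
      tendsto_neg_atBot_atTop
    have hpdf_even : ∀ x : ℝ, gaussianPDFReal 0 v (-x) = gaussianPDFReal 0 v x := by
      intro x
      rw [gaussianPDFReal_zero_eq, gaussianPDFReal_zero_eq, neg_sq]
    apply this.congr
    intro x
    simp [Function.comp_def, abs_neg, hpdf_even, hφdef]
  -- integral of F' over ℝ is zero
  have hIoi : ∫ x in Ioi (0:ℝ), (x * g x * φ x - (v:ℝ) * (g' x * φ x)) = 0 - F 0 :=
    integral_Ioi_of_hasDerivAt_of_tendsto' (fun x _ => hF x) int3.integrableOn hTtop
  have hIic : ∫ x in Iic (0:ℝ), (x * g x * φ x - (v:ℝ) * (g' x * φ x)) = F 0 - 0 :=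
    integral_Iic_of_hasDerivAt_of_tendsto' (fun x _ => hF x) int3.integrableOn hTbot
  have hzero : ∫ x, (x * g x * φ x - (v:ℝ) * (g' x * φ x)) = 0 := by
    rw [← intervalIntegral.integral_Iic_add_Ioi int3.integrableOn int3.integrableOn, hIoi, hIic]
    ring
  -- conclusion
  rw [integral_gaussianReal_eq hv, integral_gaussianReal_eq hv]
  have hrw : (fun x => gaussianPDFReal 0 v x * (x * g x))
      = fun x => (x * g x * φ x - (v:ℝ) * (g' x * φ x)) + (v:ℝ) * (g' x * φ x) := by
    ext x; rw [hφdef]; ring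
  rw [hrw, integral_add int3 (int1.const_mul _), hzero, zero_add, integral_const_mul]
  congr 1
  apply integral_congr_ae
  filter_upwards with x
  rw [hφdef]; ring


/-- **Representation (repStein1) of the Stein solution**: for `X ~ N(0,σ²)` and `l`
continuously differentiable with bounded partial derivatives,
`f_l(x₁,x₂) = −∫₀¹ (2√t)⁻¹ E[∂₁l(√t x₁ + √(1−t) X, x₂)] dt`. -/
theorem steinSol_repStein1
    {Ω : Type*} [MeasurableSpace Ω] (P : Measure Ω) [IsProbabilityMeasure P]
    (σ : ℝ) (hσ : 0 < σ) (X : Ω → ℝ) (hX : Measurable X)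
    (hlaw : Measure.map X P = gaussianReal 0 (Real.toNNReal (σ ^ 2)))
    (l : ℝ × ℝ → ℝ) (hl : ContDiff ℝ 1 l)
    (hb1 : ∃ C, ∀ p, |pderiv1 l p| ≤ C) (hb2 : ∃ C, ∀ p, |pderiv2 l p| ≤ C) :
    ∀ x₁ x₂ : ℝ,
      steinSol P X σ l (x₁, x₂) =
        -∫ t in (0:ℝ)..1, (2 * Real.sqrt t)⁻¹ *
          ∫ ω, pderiv1 l (Real.sqrt t * x₁ + Real.sqrt (1 - t) * X ω, x₂) ∂P := by
  intro x₁ x₂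
  obtain ⟨C, hC⟩ := hb1
  have hσ2 : (0:ℝ) < σ ^ 2 := by positivity
  set v : ℝ≥0 := Real.toNNReal (σ ^ 2) with hvdef
  have hv : v ≠ 0 := by
    simp only [hvdef, ne_eq, Real.toNNReal_eq_zero, not_le]
    exact hσ2
  have hvr : (v:ℝ) = σ ^ 2 := Real.coe_toNNReal _ hσ2.le
  have hlc : Continuous l := hl.continuous
  have hpc : Continuous (pderiv1 l) := continuous_pderiv1 hl
  rw [steinSol, neg_mul, ← intervalIntegral.integral_const_mul, neg_inj]
  apply intervalIntegral.integral_congr_ae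
  have h1 : ∀ᵐ (t : ℝ), t ≠ 1 := by
    refine ae_iff.mpr ?_
    have : {a : ℝ | ¬ a ≠ 1} = {1} := by ext a; simp
    rw [this]
    exact measure_singleton 1
  filter_upwards [h1] with t ht1 htI
  rw [Set.uIoc_of_le zero_le_one] at htI
  have ht0 : 0 < t := htI.1
  have ht1' : t < 1 := lt_of_le_of_ne htI.2 ht1
  have hs0 : 0 < Real.sqrt (1 - t) := Real.sqrt_pos.mpr (by linarith)
  have hr0 : 0 < Real.sqrt t := Real.sqrt_pos.mpr ht0
  set r : ℝ := Real.sqrt t with hrdef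
  set s : ℝ := Real.sqrt (1 - t) with hsdef
  set g : ℝ → ℝ := fun y => l (r * x₁ + s * y, x₂) with hgdef
  set g' : ℝ → ℝ := fun y => s * pderiv1 l (r * x₁ + s * y, x₂) with hg'def
  have hgd : ∀ y, HasDerivAt g (g' y) y := by
    intro y
    have h2 : HasDerivAt (fun y : ℝ => r * x₁ + s * y) s y := by
      simpa using ((hasDerivAt_id y).const_mul s).const_add (r * x₁)
    have h3 := (hasDerivAt_slice hl x₂ (r * x₁ + s * y)).comp y h2
    simpa [hgdef, hg'def, mul_comm, Function.comp_def] using h3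
  have hg'c : Continuous g' :=
    continuous_const.mul (hpc.comp ((continuous_const.add
      (continuous_const.mul continuous_id)).prodMk continuous_const))
  have hg'bd : ∀ y, |g' y| ≤ s * C := by
    intro y
    rw [hg'def, abs_mul, abs_of_nonneg hs0.le]
    exact mul_le_mul_of_nonneg_left (hC _) hs0.le
  have hibp := gaussian_ibp hv g g' hgd hg'c hg'bd
  have e1 : ∫ ω, X ω * l (r * x₁ + s * X ω, x₂) ∂P
      = ∫ x, x * g x ∂(gaussianReal 0 v) := by
    rw [← hlaw]
    exact (integral_map hX.aemeasurable
      ((continuous_id.mul (hlc.comp ((continuous_const.add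
        (continuous_const.mul continuous_id)).prodMk continuous_const))).aestronglyMeasurable)).symm
  have e2 : ∫ ω, pderiv1 l (r * x₁ + s * X ω, x₂) ∂P
      = ∫ x, pderiv1 l (r * x₁ + s * x, x₂) ∂(gaussianReal 0 v) := by
    rw [← hlaw]
    exact (integral_map hX.aemeasurable
      ((hpc.comp ((continuous_const.add
        (continuous_const.mul continuous_id)).prodMk continuous_const)).aestronglyMeasurable)).symm
  have e3 : ∫ x, g' x ∂(gaussianReal 0 v)
      = s * ∫ x, pderiv1 l (r * x₁ + s * x, x₂) ∂(gaussianReal 0 v) := by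
    rw [hg'def]
    exact integral_const_mul s _
  have hsq : Real.sqrt (t * (1 - t)) = r * s := Real.sqrt_mul ht0.le _
  rw [hsq, e1, hibp, e3, ← e2, hvr]
  have hJ : ∫ ω, pderiv1 l (r * x₁ + s * X ω, x₂) ∂P
      = ∫ ω, pderiv1 l (Real.sqrt t * x₁ + Real.sqrt (1 - t) * X ω, x₂) ∂P := rfl
  rw [hJ]
  field_simp
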